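/- Let ω : ℕ≥1 → ℂ be a multiplicative function that is periodic with period M (ω(n+M) = ω(n) for all n ≥ 1) and not identically zero, and let p be a prime that does not divide M. Then |ω(p)| = 1. -/

import Mathlib

/-- If `ω : ℕ≥1 → ℂ` is multiplicative, periodic with period `M`, not
identically zero, and `p` is a prime not dividing `M`, then `|ω(p)| = 1`. -/
theorem periodic_multiplicative_abs_one_at_primes
    (ω : ℕ → ℂ) (M : ℕ) (hM : 1 ≤ M)
    (hω1 : ω 1 = 1)
    (hωmul : ∀ m n : ℕ, 0 < m → 0 < n → Nat.Coprime m n → ω (m * n) = ω m * ω n)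
    (hper : ∀ n : ℕ, 1 ≤ n → ω (n + M) = ω n)
    (hne : ∃ m : ℕ, 1 ≤ m ∧ ω m ≠ 0)
    (p : ℕ) (hp : p.Prime) (hpM : ¬ p ∣ M) :
    ‖ω p‖ = 1 := by
  -- ω depends only on residue mod M (for positive arguments)
  have hstep : ∀ t n : ℕ, 1 ≤ n → ω (n + t * M) = ω n := by
    intro t
    induction t with
    | zero => intro n hn; simp
    | succ t ih =>
      intro n hn
      have h : n + (t + 1) * M = (n + t * M) + M := by ring
      rw [h, hper _ (by omega), ih n hn]
  have hcong : ∀ a b : ℕ, 1 ≤ a → 1 ≤ b → a ≡ b [MOD M] → ω a = ω b := by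
    intro a b ha hb h
    rcases le_total a b with hle | hle
    · obtain ⟨t, ht⟩ := (Nat.modEq_iff_dvd' hle).mp h
      rw [mul_comm] at ht
      have hb' : b = a + t * M := by omega
      rw [hb', hstep t a ha]
    · obtain ⟨t, ht⟩ := (Nat.modEq_iff_dvd' hle).mp h.symm
      rw [mul_comm] at ht
      have ha' : a = b + t * M := by omega
      rw [ha', hstep t b hb]
  have hpPos : 0 < p := hp.pos
  have hcop : Nat.Coprime p M := (Nat.Prime.coprime_iff_not_dvd hp).mpr hpM
  -- main induction: realize ω(p)^k as a value of ω
  have key : ∀ k : ℕ, ∃ n : ℕ, 1 ≤ n ∧ n ≡ p ^ k [MOD M] ∧ Nat.Coprime n p ∧ ω n = ω p ^ k := by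
    intro k
    induction k with
    | zero => exact ⟨1, le_refl 1, by simp [Nat.ModEq], Nat.coprime_one_left p, by simp [hω1]⟩
    | succ k ih =>
      obtain ⟨n, hn1, hn2, hn3, hn4⟩ := ih
      -- gcd n M = gcd (p^k) M = 1
      have hnM : Nat.Coprime n M := by
        have := hn2.gcd_eq
        unfold Nat.Coprime
        rw [this]
        exact Nat.Coprime.pow_left k hcop
      have hMnp : Nat.Coprime M (n * p) :=
        Nat.Coprime.mul_right hnM.symm hcop.symm
      obtain ⟨x, hx1, hx2⟩ := Nat.chineseRemainder hMnp p 1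
      set m : ℕ := x + M * (n * p) with hm_def
      have hm_ge : 1 ≤ m := by
        have : 1 ≤ M * (n * p) := Nat.one_le_iff_ne_zero.mpr (by positivity)
        omega
      have hmp : m ≡ p [MOD M] := by
        have : m % M = x % M := Nat.add_mul_mod_self_left x M (n * p)
        exact Nat.ModEq.trans this hx1
      have hm1 : m ≡ 1 [MOD n * p] := by
        have : m % (n * p) = x % (n * p) := Nat.add_mul_mod_self_right x M (n * p)
        exact Nat.ModEq.trans this hx2
      have hmnp : Nat.Coprime m (n * p) := by
        unfold Nat.Coprime
        rw [hm1.gcd_eq]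
        exact Nat.gcd_one_left _
      have hm_copp : Nat.Coprime m p := hmnp.coprime_dvd_right (dvd_mul_left p n)
      have hm_copn : Nat.Coprime n m := (hmnp.coprime_dvd_right (dvd_mul_right n p)).symm
      have hωm : ω m = ω p := hcong m p hm_ge hpPos hmp
      refine ⟨n * m, ?_, ?_, ?_, ?_⟩
      · exact Nat.one_le_iff_ne_zero.mpr (by positivity)
      · have := Nat.ModEq.mul hn2 hmp
        simpa [pow_succ] using this
      · exact Nat.Coprime.mul hn3 hm_copp
      · rw [hωmul n m (by omega) (by omega) hm_copn, hn4, hωm, pow_succ]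
  -- apply with k = totient M
  have htotpos : 0 < M.totient := Nat.totient_pos.mpr (by omega)
  obtain ⟨n, hn1, hn2, _, hn4⟩ := key M.totient
  have hpow1 : p ^ M.totient ≡ 1 [MOD M] := Nat.ModEq.pow_totient hcop
  have hωn : ω n = 1 := by
    rw [hcong n 1 hn1 le_rfl (hn2.trans hpow1), hω1]
  have habs : ‖ω p‖ ^ M.totient = 1 := by
    rw [← norm_pow, ← hn4, hωn, norm_one]
  have h0 : (0:ℝ) ≤ ‖ω p‖ := norm_nonneg _
  rcases (pow_eq_one_iff_cases.mp habs) with h | h | h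
  · omega
  · exact h
  · nlinarith
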